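/- arXiv:1512.08088 — 2 statements merged into one kernel-verified Lean document; each statement's English description precedes it below -/
import Mathlib

section
/- Let ρ be a congruence on a commutative semiring A. Then √(√ρ) = √ρ = √(ρ₊); in particular √ρ is a radical congruence. -/
/-- The twisted product on `A × A`. -/
def tmul {A : Type*} [CommSemiring A] (p q : A × A) : A × A :=
  (p.1 * q.1 + p.2 * q.2, p.1 * q.2 + p.2 * q.1)

/-- Twisted powers, with `(a,b)^{∗0} = (1,0)`. -/
def tpow {A : Type*} [CommSemiring A] (p : A × A) : ℕ → A × A
  | 0 => (1, 0)
  | n + 1 => tmul (tpow p n) p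

/-- `ρ` is a congruence on the commutative semiring `A`. -/
def IsCong {A : Type*} [CommSemiring A] (ρ : Set (A × A)) : Prop :=
  (∀ a : A, (a, a) ∈ ρ) ∧
  (∀ a b : A, (a, b) ∈ ρ → (b, a) ∈ ρ) ∧
  (∀ a b c : A, (a, b) ∈ ρ → (b, c) ∈ ρ → (a, c) ∈ ρ) ∧
  (∀ a b c d : A, (a, b) ∈ ρ → (c, d) ∈ ρ → (a + c, b + d) ∈ ρ) ∧
  (∀ a b c d : A, (a, b) ∈ ρ → (c, d) ∈ ρ → (a * c, b * d) ∈ ρ)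

/-- `ρ₊ = {(a,b) : (a+c, b+c) ∈ ρ for some c}`. -/
def plusPart {A : Type*} [CommSemiring A] (ρ : Set (A × A)) : Set (A × A) :=
  {p | ∃ c : A, (p.1 + c, p.2 + c) ∈ ρ}

/-- `√ρ = {(a,b) : (a,b)^{∗n} + (c,c) ∈ ρ for some c and some positive n}`. -/
def rad {A : Type*} [CommSemiring A] (ρ : Set (A × A)) : Set (A × A) :=
  {p | ∃ c : A, ∃ n : ℕ, 0 < n ∧ tpow p n + (c, c) ∈ ρ}

section Aux
variable {A : Type*} [CommSemiring A]

lemma tmul_comm (p q : A × A) : tmul p q = tmul q p := by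
  simp [tmul, Prod.ext_iff]; constructor <;> ring

lemma tmul_assoc (p q r : A × A) : tmul (tmul p q) r = tmul p (tmul q r) := by
  simp [tmul, Prod.ext_iff]; constructor <;> ring

lemma tmul_one (p : A × A) : tmul ((1, 0) : A × A) p = p := by
  simp [tmul]

lemma tpow_add (p : A × A) (m n : ℕ) :
    tpow p (m + n) = tmul (tpow p m) (tpow p n) := by
  induction n with
  | zero => simp [tpow, tmul_comm (tpow p m) (1,0), tmul_one]
  | succ n ih =>
      rw [← Nat.add_assoc]
      show tmul (tpow p (m + n)) p = _
      rw [ih]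
      show _ = tmul (tpow p m) (tmul (tpow p n) p)
      rw [tmul_assoc]

lemma tpow_mul (p : A × A) (m n : ℕ) :
    tpow p (m * n) = tpow (tpow p m) n := by
  induction n with
  | zero => simp [tpow]
  | succ n ih =>
      show tpow p (m * n + m) = tmul (tpow (tpow p m) n) (tpow p m)
      rw [tpow_add, ih]

lemma tmul_diag (x y : A × A) (a : A) :
    tmul (x + (a, a)) y = tmul x y + (a * (y.1 + y.2), a * (y.1 + y.2)) := by
  simp [tmul, Prod.ext_iff]; constructor <;> ring

lemma tpow_diag (q : A × A) (c : A) (n : ℕ) :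
    ∃ d : A, tpow (q + (c, c)) n = tpow q n + (d, d) := by
  induction n with
  | zero => exact ⟨0, by simp [tpow]⟩
  | succ n ih =>
      obtain ⟨d, hd⟩ := ih
      refine ⟨d * (q.1 + c + (q.2 + c)) + c * ((tpow q n).1 + (tpow q n).2),
        ?_⟩
      show tmul (tpow (q + (c, c)) n) (q + (c, c)) = tmul (tpow q n) q + _
      rw [hd, tmul_diag, tmul_comm, tmul_diag, tmul_comm]
      simp [Prod.ext_iff]
      constructor <;> ring

end Aux

/-- For a congruence `ρ` on a commutative semiring `A`,
`√(√ρ) = √ρ = √(ρ₊)`; in particular `√ρ` is a radical congruence. -/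
theorem rad_rad {A : Type*} [CommSemiring A] (ρ : Set (A × A)) (hρ : IsCong ρ) :
    rad (rad ρ) = rad ρ ∧ rad ρ = rad (plusPart ρ) := by

  obtain ⟨hrefl, hsymm, htrans, hadd, hmul⟩ := hρ
  constructor
  · apply Set.Subset.antisymm
    · rintro p ⟨c, n, hn, hmem⟩
      obtain ⟨d, m, hm, hmem2⟩ := hmem
      obtain ⟨e, he⟩ := tpow_diag (tpow p n) c m
      rw [he, ← tpow_mul p n m] at hmem2
      refine ⟨e + d, n * m, Nat.mul_pos hn hm, ?_⟩
      have : tpow p (n * m) + (e, e) + (d, d) = tpow p (n * m) + (e + d, e + d) := by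
        simp [Prod.ext_iff]; constructor <;> ring
      rw [← this]
      exact hmem2
    · rintro p ⟨c, n, hn, hmem⟩
      exact ⟨c, n, hn, 0, 1, Nat.one_pos, by
        simpa [tpow, tmul] using (show ((tpow p n).1 + c, (tpow p n).2 + c) ∈ ρ from hmem)⟩
  · apply Set.Subset.antisymm
    · rintro p ⟨c, n, hn, hmem⟩
      exact ⟨c, n, hn, 0, by simpa using (show ((tpow p n).1 + c, (tpow p n).2 + c) ∈ ρ from hmem)⟩
    · rintro p ⟨c, n, hn, hmem⟩
      obtain ⟨d, hd⟩ := hmem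
      refine ⟨c + d, n, hn, ?_⟩
      have : tpow p n + (c + d, c + d) = ((tpow p n + (c, c)).1 + d, (tpow p n + (c, c)).2 + d) := by
        simp [Prod.ext_iff]; constructor <;> ring
      rw [this]
      exact hd
end

section
/- Let A be a commutative semiring and ρ a maximal congruence on A satisfying ρ = ρ₊ (where ρ₊ = {(a,b) : (a+c, b+c) ∈ ρ for some c ∈ A}). Then ρ is a prime congruence: whenever (ac+bd, ad+bc) ∈ ρ, either (a,b) ∈ ρ or (c,d) ∈ ρ. -/
/-- A maximal congruence `ρ` on a commutative semiring satisfying `ρ = ρ₊`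
is a prime congruence. -/
theorem maximal_isPrime {A : Type*} [CommSemiring A] (ρ : Set (A × A))
    (hρ : IsCong ρ) (hproper : ρ ≠ Set.univ)
    (hmax : ∀ τ : Set (A × A), IsCong τ → ρ ⊆ τ → τ = ρ ∨ τ = Set.univ)
    (hplus : ρ = plusPart ρ) :
    ∀ a b c d : A, (a * c + b * d, a * d + b * c) ∈ ρ → (a, b) ∈ ρ ∨ (c, d) ∈ ρ := by
  obtain ⟨hrefl, hsymm, htrans, hadd, hmul⟩ := hρ
  intro a b c d hcd
  set τ : Set (A × A) := {p | (a * p.1 + b * p.2, a * p.2 + b * p.1) ∈ ρ} with hτ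
  have hτcong : IsCong τ := by
    refine ⟨fun x => hrefl _, fun x y h => hsymm _ _ h, ?_, ?_, ?_⟩
    · intro x y z hxy hyz
      have h1 := hadd _ _ _ _ hxy hyz
      have h2 : (a * x + b * z + (a * y + b * y), a * z + b * x + (a * y + b * y)) ∈ ρ := by
        have e1 : a * x + b * z + (a * y + b * y) = a * x + b * y + (a * y + b * z) := by ring
        have e2 : a * z + b * x + (a * y + b * y) = a * y + b * x + (a * z + b * y) := by ring
        rw [e1, e2]; exact h1
      show (a * x + b * z, a * z + b * x) ∈ ρ
      rw [hplus]; exact ⟨a * y + b * y, h2⟩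
    · intro x y z w hxy hzw
      have h1 := hadd _ _ _ _ hxy hzw
      have e1 : a * (x + z) + b * (y + w) = a * x + b * y + (a * z + b * w) := by ring
      have e2 : a * (y + w) + b * (x + z) = a * y + b * x + (a * w + b * z) := by ring
      show (a * (x + z) + b * (y + w), a * (y + w) + b * (x + z)) ∈ ρ
      rw [e1, e2]; exact h1
    · intro x y z w hxy hzw
      have h1 := hmul _ _ _ _ hxy (hrefl z)
      have h2 := hmul _ _ _ _ hzw (hrefl y)
      have h3 := hadd _ _ _ _ h1 h2
      have h4 : (a * (x * z) + b * (y * w) + (a * (y * z) + b * (y * z)),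
                 a * (y * w) + b * (x * z) + (a * (y * z) + b * (y * z))) ∈ ρ := by
        have e1 : a * (x * z) + b * (y * w) + (a * (y * z) + b * (y * z))
            = (a * x + b * y) * z + (a * z + b * w) * y := by ring
        have e2 : a * (y * w) + b * (x * z) + (a * (y * z) + b * (y * z))
            = (a * y + b * x) * z + (a * w + b * z) * y := by ring
        rw [e1, e2]; exact h3
      show (a * (x * z) + b * (y * w), a * (y * w) + b * (x * z)) ∈ ρ
      rw [hplus]; exact ⟨a * (y * z) + b * (y * z), h4⟩
  have hsub : ρ ⊆ τ := by
    intro p hp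
    obtain ⟨x, y⟩ := p
    have h1 := hmul _ _ _ _ (hrefl a) hp
    have h2 := hmul _ _ _ _ (hrefl b) (hsymm _ _ hp)
    exact hadd _ _ _ _ h1 h2
  rcases hmax τ hτcong hsub with h | h
  · right
    have : (c, d) ∈ τ := by
      show (a * c + b * d, a * d + b * c) ∈ ρ
      exact hcd
    rw [h] at this; exact this
  · left
    have : ((1 : A), (0 : A)) ∈ τ := h ▸ Set.mem_univ _
    have h10 : (a * 1 + b * 0, a * 0 + b * 1) ∈ ρ := this
    simpa using h10
end
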